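/- Let α, β : ℤ × ℝ → ℂ be differentiable in t. For z ∈ ℂ∖{0} define the 2×2 complex matrices U(z,n,t) = [[z, α(n,t)], [β(n,t)z, 1]] and V(z,n,t) = i·[[z − 1 − α(n,t)β(n−1,t), α(n,t) − α(n−1,t)z⁻¹], [β(n−1,t)z − β(n,t), 1 + α(n−1,t)β(n,t) − z⁻¹]]. Then the zero-curvature equation ∂ₜU(z,n,t) + U(z,n,t)V(z,n,t) − V(z,n+1,t)U(z,n,t) = 0 holds for all z ∈ ℂ∖{0} and all (n,t) ∈ ℤ×ℝ if and only if (α,β) solves the Ablowitz–Ladik system −i∂ₜα − (1 − αβ)(α⁻ + α⁺) + 2α = 0 and −i∂ₜβ + (1 − αβ)(β⁻ + β⁺) − 2β = 0 on ℤ×ℝ. -/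

import Mathlib

set_option maxHeartbeats 1000000


/-- The spatial zero-curvature matrix `U(z,n,t)` of the Ablowitz–Ladik system. -/
noncomputable def ALUmat (α β : ℤ → ℝ → ℂ) (z : ℂ) (n : ℤ) (t : ℝ) :
    Matrix (Fin 2) (Fin 2) ℂ :=
  !![z, α n t; β n t * z, 1]

/-- The temporal zero-curvature matrix `V(z,n,t)` of the Ablowitz–Ladik system. -/
noncomputable def ALVmat (α β : ℤ → ℝ → ℂ) (z : ℂ) (n : ℤ) (t : ℝ) :
    Matrix (Fin 2) (Fin 2) ℂ :=
  Complex.I •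
    !![z - 1 - α n t * β (n - 1) t, α n t - α (n - 1) t * z⁻¹;
       β (n - 1) t * z - β n t, 1 + α (n - 1) t * β n t - z⁻¹]

/-- The zero-curvature equation `∂ₜU + U V - V⁺ U = 0` holds for all `z ≠ 0` and all
`(n,t) ∈ ℤ × ℝ` if and only if `(α, β)` solves the Ablowitz–Ladik system. -/
theorem zero_curvature_iff_ablowitz_ladik (α β αt βt : ℤ → ℝ → ℂ)
    (hα : ∀ (n : ℤ) (t : ℝ), HasDerivAt (α n) (αt n t) t)
    (hβ : ∀ (n : ℤ) (t : ℝ), HasDerivAt (β n) (βt n t) t) :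
    (∀ z : ℂ, z ≠ 0 → ∀ (n : ℤ) (t : ℝ),
        !![(0 : ℂ), αt n t; βt n t * z, 0]
          + ALUmat α β z n t * ALVmat α β z n t
          - ALVmat α β z (n + 1) t * ALUmat α β z n t = 0)
      ↔ (∀ (n : ℤ) (t : ℝ),
          -Complex.I * αt n t
            - (1 - α n t * β n t) * (α (n - 1) t + α (n + 1) t) + 2 * α n t = 0
          ∧ -Complex.I * βt n t
            + (1 - α n t * β n t) * (β (n - 1) t + β (n + 1) t) - 2 * β n t = 0) := by
  have key : ∀ z : ℂ, z ≠ 0 → ∀ (n : ℤ) (t : ℝ),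
      !![(0 : ℂ), αt n t; βt n t * z, 0]
          + ALUmat α β z n t * ALVmat α β z n t
          - ALVmat α β z (n + 1) t * ALUmat α β z n t
      = !![0, Complex.I * (-Complex.I * αt n t
            - (1 - α n t * β n t) * (α (n - 1) t + α (n + 1) t) + 2 * α n t);
          z * (Complex.I * (-Complex.I * βt n t
            + (1 - α n t * β n t) * (β (n - 1) t + β (n + 1) t) - 2 * β n t)), 0] := by
    intro z hz n t
    have hn : (n + 1 - 1 : ℤ) = n := by ring
    simp only [ALUmat, ALVmat, hn]
    ext i j
    fin_cases i <;> fin_cases j <;>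
      simp [Matrix.mul_apply, Fin.sum_univ_two]
    · field_simp
      ring
    · field_simp
      linear_combination (αt n t * z) * Complex.I_sq
    · field_simp
      linear_combination (βt n t * z) * Complex.I_sq
    · field_simp
      ring
  constructor
  · intro h n t
    have h1 := h 1 one_ne_zero n t
    rw [key 1 one_ne_zero n t] at h1
    have e01 : Complex.I * (-Complex.I * αt n t
        - (1 - α n t * β n t) * (α (n - 1) t + α (n + 1) t) + 2 * α n t) = 0 := by
      simpa using congrFun (congrFun h1 0) 1
    have e10 : Complex.I * (-Complex.I * βt n t
        + (1 - α n t * β n t) * (β (n - 1) t + β (n + 1) t) - 2 * β n t) = 0 := by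
      simpa using congrFun (congrFun h1 1) 0
    exact ⟨(mul_eq_zero.mp e01).resolve_left Complex.I_ne_zero,
      (mul_eq_zero.mp e10).resolve_left Complex.I_ne_zero⟩
  · intro h z hz n t
    rw [key z hz n t, (h n t).1, (h n t).2]
    norm_num
    ext i j
    fin_cases i <;> fin_cases j <;> simp
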